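/- Three states with Γ > 0, triangle condition violated: let α_1, α_2, α_3 > 0 and let N be the 3×3 real symmetric matrix with diagonal entries 1 and off-diagonal entries N₁₂ = α_1α_2, N₂₃ = α_2α_3, N₃₁ = α_3α_1; assume N is positive definite, and let η_1, η_2, η_3 > 0 with η_1 + η_2 + η_3 = 1. If α_1√η_1 ≥ α_2√η_2, α_1√η_1 ≥ α_3√η_3, and α_1√η_1 ≥ α_2√η_2 + α_3√η_3, then the maximum of Σ_i η_i x_i over x ∈ ℝ³ with N − diag(x) positive semidefinite (no sign constraint) equals 1 − 2√(η_1η_2) α_1α_2 + 2√(η_2η_3) α_2α_3 − 2√(η_3η_1) α_3α_1, and it is attained at x₁ = 1 − α_1(α_2√η_2 + α_3√η_3)/√η_1, x₂ = 1 − α_2(α_1√η_1 − α_3√η_3)/√η_2, x₃ = 1 − α_3(α_1√η_1 − α_2√η_2)/√η_3. -/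

import Mathlib

set_option maxHeartbeats 1000000

private lemma psd3_of_quadform {a b c d e f : ℝ}
    (h : ∀ v₁ v₂ v₃ : ℝ, 0 ≤ a*v₁^2 + b*v₂^2 + c*v₃^2 + 2*d*(v₁*v₂) + 2*e*(v₁*v₃) + 2*f*(v₂*v₃)) :
    (!![a, d, e; d, b, f; e, f, c] : Matrix (Fin 3) (Fin 3) ℝ).PosSemidef := by
  refine Matrix.PosSemidef.of_dotProduct_mulVec_nonneg ?_ (fun x => ?_)
  · ext i j
    fin_cases i <;> fin_cases j <;> simp [Matrix.conjTranspose_apply]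
  · have hx := h (x 0) (x 1) (x 2)
    simp [dotProduct, Matrix.mulVec, Fin.sum_univ_three]
    nlinarith [hx]

private lemma quadform_of_psd3 {a b c d e f : ℝ}
    (h : (!![a, d, e; d, b, f; e, f, c] : Matrix (Fin 3) (Fin 3) ℝ).PosSemidef)
    (v₁ v₂ v₃ : ℝ) :
    0 ≤ a*v₁^2 + b*v₂^2 + c*v₃^2 + 2*d*(v₁*v₂) + 2*e*(v₁*v₃) + 2*f*(v₂*v₃) := by
  have hx := h.dotProduct_mulVec_nonneg ![v₁, v₂, v₃]
  simp [dotProduct, Matrix.mulVec, Fin.sum_univ_three] at hx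
  nlinarith [hx]

/-- Three pure states with `Γ > 0`, triangle condition violated
(`α₁√η₁` dominates): the maximum of the relaxed problem is
`1 - 2√(η₁η₂)α₁α₂ + 2√(η₂η₃)α₂α₃ - 2√(η₃η₁)α₃α₁`, attained at the indicated
point. -/
theorem three_state_gamma_pos_no_triangle
    (α₁ α₂ α₃ η₁ η₂ η₃ : ℝ)
    (hα₁ : 0 < α₁) (hα₂ : 0 < α₂) (hα₃ : 0 < α₃)
    (hN : (!![1, α₁ * α₂, α₃ * α₁; α₁ * α₂, 1, α₂ * α₃; α₃ * α₁, α₂ * α₃, 1] :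
      Matrix (Fin 3) (Fin 3) ℝ).PosDef)
    (hη₁ : 0 < η₁) (hη₂ : 0 < η₂) (hη₃ : 0 < η₃) (hsum : η₁ + η₂ + η₃ = 1)
    (hdom₂ : α₂ * Real.sqrt η₂ ≤ α₁ * Real.sqrt η₁)
    (hdom₃ : α₃ * Real.sqrt η₃ ≤ α₁ * Real.sqrt η₁)
    (hviol : α₂ * Real.sqrt η₂ + α₃ * Real.sqrt η₃ ≤ α₁ * Real.sqrt η₁) :
    IsGreatest {p : ℝ | ∃ x : Fin 3 → ℝ,
        (!![1, α₁ * α₂, α₃ * α₁; α₁ * α₂, 1, α₂ * α₃; α₃ * α₁, α₂ * α₃, 1] -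
          Matrix.diagonal x).PosSemidef ∧
        p = η₁ * x 0 + η₂ * x 1 + η₃ * x 2}
      (1 - 2 * Real.sqrt (η₁ * η₂) * (α₁ * α₂) +
        2 * Real.sqrt (η₂ * η₃) * (α₂ * α₃) -
        2 * Real.sqrt (η₃ * η₁) * (α₃ * α₁)) ∧
    ((!![1, α₁ * α₂, α₃ * α₁; α₁ * α₂, 1, α₂ * α₃; α₃ * α₁, α₂ * α₃, 1] -
        Matrix.diagonal
          ![1 - α₁ * (α₂ * Real.sqrt η₂ + α₃ * Real.sqrt η₃) / Real.sqrt η₁,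
            1 - α₂ * (α₁ * Real.sqrt η₁ - α₃ * Real.sqrt η₃) / Real.sqrt η₂,
            1 - α₃ * (α₁ * Real.sqrt η₁ - α₂ * Real.sqrt η₂) / Real.sqrt η₃]).PosSemidef ∧
      η₁ * (1 - α₁ * (α₂ * Real.sqrt η₂ + α₃ * Real.sqrt η₃) / Real.sqrt η₁) +
        η₂ * (1 - α₂ * (α₁ * Real.sqrt η₁ - α₃ * Real.sqrt η₃) / Real.sqrt η₂) +
        η₃ * (1 - α₃ * (α₁ * Real.sqrt η₁ - α₂ * Real.sqrt η₂) / Real.sqrt η₃) =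
      1 - 2 * Real.sqrt (η₁ * η₂) * (α₁ * α₂) +
        2 * Real.sqrt (η₂ * η₃) * (α₂ * α₃) -
        2 * Real.sqrt (η₃ * η₁) * (α₃ * α₁)) := by
  set s₁ := Real.sqrt η₁ with hs₁def
  set s₂ := Real.sqrt η₂ with hs₂def
  set s₃ := Real.sqrt η₃ with hs₃def
  have hs₁ : 0 < s₁ := Real.sqrt_pos.mpr hη₁
  have hs₂ : 0 < s₂ := Real.sqrt_pos.mpr hη₂
  have hs₃ : 0 < s₃ := Real.sqrt_pos.mpr hη₃
  have hq₁ : s₁ ^ 2 = η₁ := Real.sq_sqrt hη₁.le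
  have hq₂ : s₂ ^ 2 = η₂ := Real.sq_sqrt hη₂.le
  have hq₃ : s₃ ^ 2 = η₃ := Real.sq_sqrt hη₃.le
  have hr12 : Real.sqrt (η₁ * η₂) = s₁ * s₂ := Real.sqrt_mul hη₁.le η₂
  have hr23 : Real.sqrt (η₂ * η₃) = s₂ * s₃ := Real.sqrt_mul hη₂.le η₃
  have hr31 : Real.sqrt (η₃ * η₁) = s₃ * s₁ := Real.sqrt_mul hη₃.le η₁
  -- matrix rewriting
  have hMeq : ∀ x : Fin 3 → ℝ,
      (!![1, α₁ * α₂, α₃ * α₁; α₁ * α₂, 1, α₂ * α₃; α₃ * α₁, α₂ * α₃, 1] -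
        Matrix.diagonal x : Matrix (Fin 3) (Fin 3) ℝ) =
      !![1 - x 0, α₁ * α₂, α₃ * α₁; α₁ * α₂, 1 - x 1, α₂ * α₃;
         α₃ * α₁, α₂ * α₃, 1 - x 2] := by
    intro x
    ext i j
    fin_cases i <;> fin_cases j <;> simp [Matrix.diagonal]
  -- the candidate point
  set y : Fin 3 → ℝ :=
    ![1 - α₁ * (α₂ * s₂ + α₃ * s₃) / s₁,
      1 - α₂ * (α₁ * s₁ - α₃ * s₃) / s₂,
      1 - α₃ * (α₁ * s₁ - α₂ * s₂) / s₃] with hydef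
  have hy0 : y 0 = 1 - α₁ * (α₂ * s₂ + α₃ * s₃) / s₁ := rfl
  have hy1 : y 1 = 1 - α₂ * (α₁ * s₁ - α₃ * s₃) / s₂ := rfl
  have hy2 : y 2 = 1 - α₃ * (α₁ * s₁ - α₂ * s₂) / s₃ := rfl
  -- value equation
  have hval : η₁ * y 0 + η₂ * y 1 + η₃ * y 2 =
      1 - 2 * (s₁ * s₂) * (α₁ * α₂) + 2 * (s₂ * s₃) * (α₂ * α₃) -
        2 * (s₃ * s₁) * (α₃ * α₁) := by
    rw [hy0, hy1, hy2, ← hq₁, ← hq₂, ← hq₃]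
    have h1 : s₁^2 + s₂^2 + s₃^2 = 1 := by rw [hq₁, hq₂, hq₃]; exact hsum
    field_simp
    linear_combination h1
  -- PSD at the candidate point
  have hpsd : (!![1, α₁ * α₂, α₃ * α₁; α₁ * α₂, 1, α₂ * α₃; α₃ * α₁, α₂ * α₃, 1] -
      Matrix.diagonal y : Matrix (Fin 3) (Fin 3) ℝ).PosSemidef := by
    rw [hMeq y, hy0, hy1, hy2]
    have heq : ∀ t : ℝ, 1 - (1 - t) = t := fun t => by ring
    rw [heq, heq, heq]
    apply psd3_of_quadform
    intro v₁ v₂ v₃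
    set u := s₂ * v₁ + s₁ * v₂ with hu
    set w := s₃ * v₁ + s₁ * v₃ with hw
    set P := α₂ * s₃ * (α₁ * s₁ - α₃ * s₃) with hP
    set S := α₃ * s₂ * (α₁ * s₁ - α₂ * s₂) with hS
    set R := α₂ * α₃ * (s₂ * s₃) with hR
    have hPnn : 0 ≤ P := mul_nonneg (mul_pos hα₂ hs₃).le (by linarith)
    have hSnn : 0 ≤ S := mul_nonneg (mul_pos hα₃ hs₂).le (by linarith)
    have hRpos : 0 < R := mul_pos (mul_pos hα₂ hα₃) (mul_pos hs₂ hs₃)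
    have hdet : R ^ 2 ≤ P * S := by
      nlinarith [mul_nonneg (mul_pos (mul_pos (mul_pos hα₂ hα₃) (mul_pos hs₂ hs₃))
        (mul_pos hα₁ hs₁)).le (sub_nonneg.mpr hviol)]
    have hPpos : 0 < P := by nlinarith [mul_pos hRpos hRpos]
    have key : 0 ≤ P * u ^ 2 + 2 * R * (u * w) + S * w ^ 2 := by
      nlinarith [sq_nonneg (P * u + R * w), mul_nonneg (sub_nonneg.mpr hdet) (sq_nonneg w),
        hPpos]
    have hid : s₁ ^ 2 * s₂ * s₃ *
        (α₁ * (α₂ * s₂ + α₃ * s₃) / s₁ * v₁ ^ 2 +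
          α₂ * (α₁ * s₁ - α₃ * s₃) / s₂ * v₂ ^ 2 +
          α₃ * (α₁ * s₁ - α₂ * s₂) / s₃ * v₃ ^ 2 +
          2 * (α₁ * α₂) * (v₁ * v₂) + 2 * (α₃ * α₁) * (v₁ * v₃) +
          2 * (α₂ * α₃) * (v₂ * v₃)) =
        P * u ^ 2 + 2 * R * (u * w) + S * w ^ 2 := by
      rw [hP, hS, hR, hu, hw]
      field_simp
      ring
    have hc : 0 < s₁ ^ 2 * s₂ * s₃ := by positivity
    have h2 : 0 ≤ s₁ ^ 2 * s₂ * s₃ *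
        (α₁ * (α₂ * s₂ + α₃ * s₃) / s₁ * v₁ ^ 2 +
          α₂ * (α₁ * s₁ - α₃ * s₃) / s₂ * v₂ ^ 2 +
          α₃ * (α₁ * s₁ - α₂ * s₂) / s₃ * v₃ ^ 2 +
          2 * (α₁ * α₂) * (v₁ * v₂) + 2 * (α₃ * α₁) * (v₁ * v₃) +
          2 * (α₂ * α₃) * (v₂ * v₃)) := by rw [hid]; exact key
    exact (mul_nonneg_iff_of_pos_left hc).mp h2
  refine ⟨⟨⟨y, hpsd, ?_⟩, ?_⟩, hpsd, ?_⟩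
  · rw [hval, hr12, hr23, hr31]
  · rintro p ⟨x, hx, rfl⟩
    rw [hMeq x] at hx
    have h := quadform_of_psd3 hx s₁ (-s₂) (-s₃)
    rw [hr12, hr23, hr31]
    have h2 : η₁ * x 0 + η₂ * x 1 + η₃ * x 2 ≤ η₁ + η₂ + η₃
        - 2 * (s₁ * s₂) * (α₁ * α₂) + 2 * (s₂ * s₃) * (α₂ * α₃)
        - 2 * (s₃ * s₁) * (α₃ * α₁) := by
      rw [← hq₁, ← hq₂, ← hq₃]
      nlinarith [h]
    linarith [h2, hsum]
  · rw [hr12, hr23, hr31, ← hy0, ← hy1, ← hy2]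
    exact hval
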